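/- arXiv:2602.19343 — 3 statements merged into one kernel-verified Lean document; each statement's English description precedes it below -/
import Mathlib

section
/- If P is a polynomial and R > 0, then for every complex z, P(z) = (1/(2πi)) ∮_{|t|=R} e^{zt} (BP)(t) dt, where BP is the Borel transform of P. -/
open Complex Finset

lemma circleIntegral_finset_sum {ι : Type*} (s : Finset ι) (f : ι → ℂ → ℂ) (c : ℂ) (R : ℝ)
    (h : ∀ i ∈ s, CircleIntegrable (f i) c R) :
    (∮ t in C(c, R), ∑ i ∈ s, f i t) = ∑ i ∈ s, ∮ t in C(c, R), f i t := by
  simp only [circleIntegral, smul_sum]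
  exact intervalIntegral.integral_finset_sum fun i hi =>
    ((circleIntegrable_iff R).mp (h i hi))

lemma key (z : ℂ) {R : ℝ} (hR : 0 < R) (n : ℕ) :
    (∮ t in C(0, R), Complex.exp (z * t) / t ^ (n + 1)) =
      2 * Real.pi * Complex.I * z ^ n / n.factorial := by
  lift R to NNReal using hR.le with R' hR'
  have hdiff : Differentiable ℂ (fun t => Complex.exp (z * t)) := by
    exact (differentiable_const z |>.mul differentiable_id).cexp
  have hR0 : (0 : NNReal) < R' := by exact_mod_cast hR
  have h := hdiff.hasFPowerSeriesOnBall 0 hR0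
  have h2 := h.factorial_smul (1 : ℂ) n
  have h3 : iteratedFDeriv ℂ n (fun t => Complex.exp (z * t)) 0 (fun _ => 1) = z ^ n := by
    rw [← iteratedDeriv_eq_iteratedFDeriv, iteratedDeriv_cexp_const_mul]
    simp
  rw [h3] at h2
  have h4 := cauchyPowerSeries_apply (fun t => Complex.exp (z * t)) 0 R' n 1
  rw [h4] at h2
  have hsimp : (∮ t in C((0:ℂ), (R':ℝ)), ((1:ℂ) / (t - 0)) ^ n • (t - 0)⁻¹ • Complex.exp (z * t))
      = ∮ t in C((0:ℂ), (R':ℝ)), Complex.exp (z * t) / t ^ (n + 1) := by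
    apply circleIntegral.integral_congr (le_of_lt (by exact_mod_cast hR0))
    intro t ht
    simp only [sub_zero, smul_eq_mul, one_div, pow_succ]
    field_simp
    rw [one_div_pow, div_div, mul_comm (t ^ n) t]
  rw [hsimp] at h2
  have hpi : (2 * (Real.pi : ℂ) * Complex.I) ≠ 0 := by
    simp [Real.pi_ne_zero, Complex.I_ne_zero]
  have hfact : ((n.factorial : ℂ)) ≠ 0 := by exact_mod_cast n.factorial_ne_zero
  -- h2 : n ! • ((2πI)⁻¹ • ∮ ...) = z ^ n
  rw [smul_eq_mul, nsmul_eq_mul] at h2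
  field_simp at h2
  rw [eq_div_iff hfact]
  linear_combination h2

/-- Pólya representation for polynomials: for any R > 0,
P(z) = (1/(2πi)) ∮_{|t|=R} e^{zt} (BP)(t) dt. -/
theorem stmt1 (P : Polynomial ℂ) (R : ℝ) (hR : 0 < R) (z : ℂ) :
    P.eval z = (2 * Real.pi * Complex.I)⁻¹ *
      ∮ t in C(0, R), Complex.exp (z * t) *
        ∑ n ∈ Finset.range (P.natDegree + 1), ((Nat.factorial n : ℕ) : ℂ) * P.coeff n / t ^ (n + 1) := by
  have hint : ∀ n ∈ Finset.range (P.natDegree + 1),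
      CircleIntegrable (fun t => Complex.exp (z * t) * (((Nat.factorial n : ℕ) : ℂ) * P.coeff n / t ^ (n + 1))) 0 R := by
    intro n _
    apply ContinuousOn.circleIntegrable hR.le
    intro t ht
    have ht0 : t ≠ 0 := by
      intro h0
      rw [Metric.mem_sphere, h0] at ht
      simp at ht; exact hR.ne' ht.symm
    exact ((Continuous.continuousOn (by continuity)).mul
      (continuousOn_const.div (continuousOn_pow _) (fun x hx => by
        have hx0 : x ≠ 0 := by
          intro h0; rw [Metric.mem_sphere, h0] at hx; simp at hx; exact hR.ne' hx.symm
        exact pow_ne_zero _ hx0))) t ht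
  have heq : (∮ t in C((0:ℂ), R), Complex.exp (z * t) *
        ∑ n ∈ Finset.range (P.natDegree + 1), ((Nat.factorial n : ℕ) : ℂ) * P.coeff n / t ^ (n + 1))
      = ∮ t in C((0:ℂ), R), ∑ n ∈ Finset.range (P.natDegree + 1),
          Complex.exp (z * t) * (((Nat.factorial n : ℕ) : ℂ) * P.coeff n / t ^ (n + 1)) := by
    apply circleIntegral.integral_congr hR.le
    intro t _
    simp only [Finset.mul_sum]
  rw [heq, circleIntegral_finset_sum _ _ _ _ hint]
  have hterm : ∀ n ∈ Finset.range (P.natDegree + 1),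
      (∮ t in C((0:ℂ), R), Complex.exp (z * t) * (((Nat.factorial n : ℕ) : ℂ) * P.coeff n / t ^ (n + 1)))
        = 2 * Real.pi * Complex.I * (P.coeff n * z ^ n) := by
    intro n _
    have : (∮ t in C((0:ℂ), R), Complex.exp (z * t) * (((Nat.factorial n : ℕ) : ℂ) * P.coeff n / t ^ (n + 1)))
        = ((Nat.factorial n : ℕ) : ℂ) * P.coeff n * ∮ t in C((0:ℂ), R), Complex.exp (z * t) / t ^ (n + 1) := by
      rw [← circleIntegral.integral_const_mul]
      apply circleIntegral.integral_congr hR.le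
      intro t _
      ring
    rw [this, key z hR n]
    have hfact : ((n.factorial : ℂ)) ≠ 0 := by exact_mod_cast n.factorial_ne_zero
    field_simp
  rw [Finset.sum_congr rfl hterm, ← Finset.mul_sum]
  have hpi : (2 * (Real.pi : ℂ) * Complex.I) ≠ 0 := by
    simp [Real.pi_ne_zero, Complex.I_ne_zero]
  rw [← mul_assoc, inv_mul_cancel₀ hpi, one_mul]
  exact P.eval_eq_sum_range z
end

section
/- Let Φ(z) = Σ hⱼ zʲ be an entire function of exponential type, let R > 0, and let g be continuous on the circle |t| = R with g(t)/Φ(t) well-defined (Φ nonvanishing on the circle). Then for every z ∈ ℂ, Σ_{j=0}^∞ hⱼ (d/dz)^j [(1/(2πi)) ∮_{|t|=R} e^{zt} g(t)/Φ(t) dt] = (1/(2πi)) ∮_{|t|=R} e^{zt} g(t) dt; i.e., applying the differential operator Φ(D) to the function S(z) = (1/(2πi)) ∮_{|t|=R} e^{zt} g(t)/Φ(t) dt recovers (1/(2πi)) ∮_{|t|=R} e^{zt} g(t) dt. -/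
open MeasureTheory Metric Filter Set

/-- Applying Φ(D) to S(z) = (1/(2πi)) ∮_{|t|=R} e^{zt} g(t)/Φ(t) dt
recovers (1/(2πi)) ∮_{|t|=R} e^{zt} g(t) dt. -/
theorem stmt3 (h : ℕ → ℂ) (Φ : ℂ → ℂ)
    (hΦ : ∀ z : ℂ, HasSum (fun j => h j * z ^ j) (Φ z))
    (htype : ∃ A B : ℝ, 0 < A ∧ 0 < B ∧ ∀ z : ℂ, ‖Φ z‖ ≤ A * Real.exp (B * ‖z‖))
    (R : ℝ) (hR : 0 < R) (g : ℂ → ℂ)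
    (hg : ContinuousOn g (Metric.sphere (0 : ℂ) R))
    (hΦ0 : ∀ t : ℂ, ‖t‖ = R → Φ t ≠ 0) (z : ℂ) :
    HasSum (fun j => h j * iteratedDeriv j
        (fun w => (2 * Real.pi * Complex.I)⁻¹ *
          ∮ t in C(0, R), Complex.exp (w * t) * g t / Φ t) z)
      ((2 * Real.pi * Complex.I)⁻¹ * ∮ t in C(0, R), Complex.exp (z * t) * g t) := by
  clear htype
  have hR' : (0:ℝ) ≤ R := hR.le
  have h2π : (0:ℝ) ≤ 2 * Real.pi := by positivity
  -- summability of ∑ ‖h j‖ R^j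
  have hsum : Summable (fun j => ‖h j‖ * R ^ j) := by
    have h2 : Summable (fun j => h j * ((2*R : ℝ) : ℂ) ^ j) := (hΦ _).summable
    have h3 : Tendsto (fun j => ‖h j * ((2*R:ℝ):ℂ) ^ j‖) atTop (nhds 0) := by
      simpa using h2.tendsto_atTop_zero.norm
    obtain ⟨C, hC⟩ := h3.bddAbove_range
    have key : ∀ j, ‖h j‖ * R ^ j ≤ C * (1/2:ℝ)^j := by
      intro j
      have h1 : ‖h j‖ * (2*R)^j ≤ C := by
        have := hC ⟨j, rfl⟩
        simpa [norm_mul, norm_pow, abs_of_pos hR] using this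
      have e2 : ‖h j‖ * R ^ j = ‖h j‖ * (2*R)^j * (1/2:ℝ)^j := by
        have e3 : (2*R) * (1/2:ℝ) = R := by ring
        rw [mul_assoc, ← mul_pow, e3]
      rw [e2]
      exact mul_le_mul_of_nonneg_right h1 (by positivity)
    exact Summable.of_nonneg_of_le (fun j => by positivity) key
      ((summable_geometric_of_lt_one (by norm_num) (by norm_num)).mul_left C)
  -- continuity of Φ on the closed ball
  have hΦcont : ContinuousOn Φ (closedBall (0:ℂ) R) := by
    have hts : ContinuousOn (fun w : ℂ => ∑' j, h j * w ^ j) (closedBall (0:ℂ) R) := by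
      apply continuousOn_tsum (fun j => continuousOn_const.mul ((continuous_pow j).continuousOn))
        hsum
      intro j w hw
      have hw' : ‖w‖ ≤ R := by simpa [mem_closedBall, dist_eq_norm] using hw
      show ‖h j * w ^ j‖ ≤ ‖h j‖ * R ^ j
      rw [norm_mul, norm_pow]
      exact mul_le_mul_of_nonneg_left (pow_le_pow_left₀ (norm_nonneg _) hw' j) (norm_nonneg _)
    exact hts.congr (fun w _ => ((hΦ w).tsum_eq).symm)
  have hcnorm : ∀ θ : ℝ, ‖circleMap 0 R θ‖ = R := fun θ => by
    simp [norm_circleMap_zero, abs_of_pos hR]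
  have hcmem : ∀ θ : ℝ, circleMap 0 R θ ∈ sphere (0:ℂ) R := fun θ => circleMap_mem_sphere _ hR' θ
  have hcball : ∀ θ : ℝ, circleMap 0 R θ ∈ closedBall (0:ℂ) R :=
    fun θ => sphere_subset_closedBall (hcmem θ)
  have hΦc0 : ∀ θ : ℝ, Φ (circleMap 0 R θ) ≠ 0 := fun θ => hΦ0 _ (hcnorm θ)
  set q : ℝ → ℂ := fun θ =>
    (2*Real.pi*Complex.I)⁻¹ * (deriv (circleMap 0 R) θ *
      (g (circleMap 0 R θ) / Φ (circleMap 0 R θ))) with hq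
  have hgc : Continuous (fun θ : ℝ => g (circleMap 0 R θ)) :=
    hg.comp_continuous (continuous_circleMap 0 R) hcmem
  have hΦc : Continuous (fun θ : ℝ => Φ (circleMap 0 R θ)) :=
    hΦcont.comp_continuous (continuous_circleMap 0 R) hcball
  have hqc : Continuous q := by
    apply continuous_const.mul
    apply Continuous.mul
    · have : deriv (circleMap 0 R) = fun θ => circleMap 0 R θ * Complex.I :=
        funext fun θ => deriv_circleMap 0 R θ
      rw [this]
      exact (continuous_circleMap 0 R).mul continuous_const
    · exact hgc.div hΦc hΦc0
  -- bound on q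
  obtain ⟨θ₀, hθ₀mem, hθ₀⟩ := (isCompact_Icc (a := (0:ℝ)) (b := 2*Real.pi)).exists_isMaxOn
    ⟨0, Set.mem_Icc.mpr ⟨le_refl 0, h2π⟩⟩ hqc.norm.continuousOn
  set Cq := ‖q θ₀‖ with hCqdef
  have hCq0 : 0 ≤ Cq := norm_nonneg _
  have hCq : ∀ θ ∈ Set.Icc (0:ℝ) (2*Real.pi), ‖q θ‖ ≤ Cq := fun θ hθ => hθ₀ hθ
  -- exponential bound
  have hexp : ∀ (w : ℂ) (θ : ℝ), ‖Complex.exp (w * circleMap 0 R θ)‖ ≤ Real.exp (‖w‖ * R) := by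
    intro w θ
    rw [Complex.norm_exp]
    apply Real.exp_le_exp.mpr
    calc (w * circleMap 0 R θ).re ≤ ‖w * circleMap 0 R θ‖ := Complex.re_le_norm _
    _ = ‖w‖ * R := by rw [norm_mul, hcnorm]
  set G : ℕ → ℂ → ℂ := fun j w => ∫ θ in (0:ℝ)..(2*Real.pi),
    (circleMap 0 R θ)^j * Complex.exp (w * circleMap 0 R θ) * q θ with hGdef
  have hFcont : ∀ (j:ℕ) (w:ℂ), Continuous
      (fun θ : ℝ => (circleMap 0 R θ)^j * Complex.exp (w * circleMap 0 R θ) * q θ) := by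
    intro j w
    exact (((continuous_circleMap 0 R).pow j).mul
      (Complex.continuous_exp.comp (continuous_const.mul (continuous_circleMap 0 R)))).mul hqc
  -- derivative of G j is G (j+1)
  have hGd : ∀ (j:ℕ) (w:ℂ), HasDerivAt (G j) (G (j+1) w) w := by
    intro j w
    have key := intervalIntegral.hasDerivAt_integral_of_dominated_loc_of_deriv_le
      (F := fun (x:ℂ) (θ:ℝ) => (circleMap 0 R θ)^j * Complex.exp (x * circleMap 0 R θ) * q θ)
      (F' := fun (x:ℂ) (θ:ℝ) => (circleMap 0 R θ)^(j+1) * Complex.exp (x * circleMap 0 R θ) * q θ)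
      (x₀ := w) (a := 0) (b := 2*Real.pi) (μ := volume)
      (bound := fun _ => R^(j+1) * Real.exp ((‖w‖+1) * R) * Cq)
      (s := ball w 1) (ball_mem_nhds _ one_pos)
      (Eventually.of_forall fun x => (hFcont j x).aestronglyMeasurable)
      ((hFcont j w).intervalIntegrable _ _)
      (hFcont (j+1) w).aestronglyMeasurable
      ?_ (continuous_const.intervalIntegrable _ _) ?_
    · exact key.2
    · apply ae_of_all
      intro θ hθ x hx
      have hθ' : θ ∈ Set.Icc (0:ℝ) (2*Real.pi) := by
        rw [Set.uIoc_of_le h2π] at hθ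
        exact Set.Ioc_subset_Icc_self hθ
      have hx' : ‖x‖ ≤ ‖w‖ + 1 := by
        have h1 : ‖x - w‖ < 1 := mem_ball_iff_norm.mp hx
        calc ‖x‖ = ‖w + (x - w)‖ := by ring_nf
        _ ≤ ‖w‖ + ‖x - w‖ := norm_add_le _ _
        _ ≤ ‖w‖ + 1 := by linarith
      have he : ‖Complex.exp (x * circleMap 0 R θ)‖ ≤ Real.exp ((‖w‖+1) * R) :=
        (hexp x θ).trans (Real.exp_le_exp.mpr (mul_le_mul_of_nonneg_right hx' hR'))
      calc ‖(circleMap 0 R θ)^(j+1) * Complex.exp (x * circleMap 0 R θ) * q θ‖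
          = R^(j+1) * ‖Complex.exp (x * circleMap 0 R θ)‖ * ‖q θ‖ := by
            rw [norm_mul, norm_mul, norm_pow, hcnorm]
      _ ≤ R^(j+1) * Real.exp ((‖w‖+1) * R) * Cq := by
            apply mul_le_mul (mul_le_mul le_rfl he (norm_nonneg _) (by positivity))
              (hCq θ hθ') (norm_nonneg _) (by positivity)
    · apply ae_of_all
      intro θ _ x _
      have h0 : HasDerivAt (fun x : ℂ => x * circleMap 0 R θ) (circleMap 0 R θ) x := by
        simpa using (hasDerivAt_id x).mul_const (circleMap 0 R θ)
      have h1 : HasDerivAt (fun x : ℂ => Complex.exp (x * circleMap 0 R θ))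
          (circleMap 0 R θ * Complex.exp (x * circleMap 0 R θ)) x := by
        simpa [mul_comm, Function.comp_def] using (Complex.hasDerivAt_exp (x * circleMap 0 R θ)).comp x h0
      have h2 := (h1.const_mul ((circleMap 0 R θ)^j)).mul_const (q θ)
      convert h2 using 1
      · rfl
      ring
  have hGderiv_eq : ∀ k, deriv (G k) = G (k+1) := fun k => funext fun w => (hGd k w).deriv
  have hGiter : ∀ (j k : ℕ), iteratedDeriv j (G k) = G (j + k) := by
    intro j
    induction j with
    | zero => intro k; simp
    | succ n ih =>
      intro k
      have e : n + 1 + k = n + (k + 1) := by omega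
      rw [e, iteratedDeriv_succ', hGderiv_eq, ih]
  -- S = G 0
  have hS : (fun w : ℂ => (2 * Real.pi * Complex.I)⁻¹ *
      ∮ t in C(0, R), Complex.exp (w * t) * g t / Φ t) = G 0 := by
    funext w
    have hG0 : G 0 w = ∫ θ in (0:ℝ)..(2*Real.pi),
        Complex.exp (w * circleMap 0 R θ) * q θ := by
      simp only [hGdef, pow_zero, one_mul]
    rw [hG0]
    simp only [circleIntegral, smul_eq_mul]
    rw [← intervalIntegral.integral_const_mul]
    apply intervalIntegral.integral_congr
    intro θ _
    simp only [hq]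
    ring
  -- RHS as an interval integral
  have hRHS : (2 * Real.pi * Complex.I)⁻¹ * (∮ t in C(0, R), Complex.exp (z * t) * g t)
      = ∫ θ in (0:ℝ)..(2*Real.pi),
        Φ (circleMap 0 R θ) * Complex.exp (z * circleMap 0 R θ) * q θ := by
    simp only [circleIntegral, smul_eq_mul]
    rw [← intervalIntegral.integral_const_mul]
    apply intervalIntegral.integral_congr
    intro θ _
    simp only [hq]
    have h1 : g (circleMap 0 R θ) / Φ (circleMap 0 R θ) * Φ (circleMap 0 R θ)
        = g (circleMap 0 R θ) := div_mul_cancel₀ _ (hΦc0 θ)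
    linear_combination (-((2*(Real.pi:ℂ)*Complex.I)⁻¹ * deriv (circleMap 0 R) θ *
      Complex.exp (z * circleMap 0 R θ))) * h1
  rw [hS, hRHS]
  simp only [hGiter, Nat.add_zero]
  -- main sum-integral interchange
  have hInt : ∀ j : ℕ, Integrable (fun θ : ℝ =>
      h j * ((circleMap 0 R θ)^j * Complex.exp (z * circleMap 0 R θ) * q θ))
      (volume.restrict (Set.Ioc (0:ℝ) (2*Real.pi))) :=
    fun j => (continuous_const.mul (hFcont j z)).integrableOn_Ioc
  have hbound : ∀ j : ℕ, ∀ θ ∈ Set.Ioc (0:ℝ) (2*Real.pi),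
      ‖h j * ((circleMap 0 R θ)^j * Complex.exp (z * circleMap 0 R θ) * q θ)‖
        ≤ ‖h j‖ * R^j * (Real.exp (‖z‖ * R) * Cq) := by
    intro j θ hθ
    have hθ' : θ ∈ Set.Icc (0:ℝ) (2*Real.pi) := Set.Ioc_subset_Icc_self hθ
    calc ‖h j * ((circleMap 0 R θ)^j * Complex.exp (z * circleMap 0 R θ) * q θ)‖
        = ‖h j‖ * (R^j * ‖Complex.exp (z * circleMap 0 R θ)‖ * ‖q θ‖) := by
          rw [norm_mul, norm_mul, norm_mul, norm_pow, hcnorm]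
    _ ≤ ‖h j‖ * (R^j * Real.exp (‖z‖ * R) * Cq) := by
          apply mul_le_mul_of_nonneg_left _ (norm_nonneg _)
          apply mul_le_mul (mul_le_mul le_rfl (hexp z θ) (norm_nonneg _) (by positivity))
            (hCq θ hθ') (norm_nonneg _) (by positivity)
    _ = ‖h j‖ * R^j * (Real.exp (‖z‖ * R) * Cq) := by ring
  have hSummable : Summable (fun j : ℕ => ∫ θ in Set.Ioc (0:ℝ) (2*Real.pi),
      ‖h j * ((circleMap 0 R θ)^j * Complex.exp (z * circleMap 0 R θ) * q θ)‖) := by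
    have hle : ∀ j : ℕ, (∫ θ in Set.Ioc (0:ℝ) (2*Real.pi),
        ‖h j * ((circleMap 0 R θ)^j * Complex.exp (z * circleMap 0 R θ) * q θ)‖)
        ≤ (volume (Set.Ioc (0:ℝ) (2*Real.pi))).toReal *
          (‖h j‖ * (R^j * (Real.exp (‖z‖ * R) * Cq))) := by
      intro j
      calc (∫ θ in Set.Ioc (0:ℝ) (2*Real.pi),
            ‖h j * ((circleMap 0 R θ)^j * Complex.exp (z * circleMap 0 R θ) * q θ)‖)
          ≤ ∫ _θ in Set.Ioc (0:ℝ) (2*Real.pi), ‖h j‖ * R^j * (Real.exp (‖z‖ * R) * Cq) := by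
            apply setIntegral_mono_on ((hInt j).norm) ((integrableOn_const_iff (by finiteness)).mpr (Or.inr (by
              rw [Real.volume_Ioc]; exact ENNReal.ofReal_lt_top))) measurableSet_Ioc
              (hbound j)
      _ = (volume (Set.Ioc (0:ℝ) (2*Real.pi))).toReal * (‖h j‖ * R^j * (Real.exp (‖z‖ * R) * Cq))
          := by rw [setIntegral_const, smul_eq_mul]; rfl
      _ = (volume (Set.Ioc (0:ℝ) (2*Real.pi))).toReal * (‖h j‖ * (R^j * (Real.exp (‖z‖ * R) * Cq)))
          := by ring
    exact Summable.of_nonneg_of_le (fun j => integral_nonneg fun θ => norm_nonneg _) hle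
      (Summable.congr ((hsum.mul_right (Real.exp (‖z‖ * R) * Cq)).mul_left
        ((volume (Set.Ioc (0:ℝ) (2*Real.pi))).toReal)) (fun j => by ring))
  have main := MeasureTheory.hasSum_integral_of_summable_integral_norm
      (μ := volume.restrict (Set.Ioc (0:ℝ) (2*Real.pi)))
      (F := fun (j:ℕ) (θ:ℝ) =>
        h j * ((circleMap 0 R θ)^j * Complex.exp (z * circleMap 0 R θ) * q θ))
      hInt hSummable
  have htsum : ∀ θ : ℝ, ∑' j : ℕ,
      h j * ((circleMap 0 R θ)^j * Complex.exp (z * circleMap 0 R θ) * q θ)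
      = Φ (circleMap 0 R θ) * Complex.exp (z * circleMap 0 R θ) * q θ := by
    intro θ
    have hs := (hΦ (circleMap 0 R θ)).mul_right
      (Complex.exp (z * circleMap 0 R θ) * q θ)
    have hs2 : HasSum (fun j : ℕ =>
        h j * ((circleMap 0 R θ)^j * Complex.exp (z * circleMap 0 R θ) * q θ))
        (Φ (circleMap 0 R θ) * Complex.exp (z * circleMap 0 R θ) * q θ) := by
      simpa [mul_assoc] using hs
    exact hs2.tsum_eq
  have hL : (fun j : ℕ => h j * G j z) = fun j : ℕ => ∫ θ in Set.Ioc (0:ℝ) (2*Real.pi),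
      h j * ((circleMap 0 R θ)^j * Complex.exp (z * circleMap 0 R θ) * q θ) := by
    funext j
    simp only [hGdef]
    rw [← intervalIntegral.integral_const_mul, intervalIntegral.integral_of_le h2π]
  rw [hL, intervalIntegral.integral_of_le h2π]
  have hRa : (∫ θ in Set.Ioc (0:ℝ) (2*Real.pi),
      Φ (circleMap 0 R θ) * Complex.exp (z * circleMap 0 R θ) * q θ ∂volume)
      = ∫ θ in Set.Ioc (0:ℝ) (2*Real.pi), ∑' j : ℕ,
        h j * ((circleMap 0 R θ)^j * Complex.exp (z * circleMap 0 R θ) * q θ) ∂volume :=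
    integral_congr_ae (ae_of_all _ fun θ => (htsum θ).symm)
  rw [hRa]
  exact main
end

section
/- Let (Tₙ) be a sequence of continuous linear maps from an F-space X to a separable F-space Y, Y₀ ⊆ Y dense, and Sₙ: Y₀ → X maps such that for all y ∈ Y₀: (i) Σ_{n=1}^k T_k S_{k−n} y converges unconditionally uniformly in k; (ii) Σ_{n=1}^∞ T_k S_{k+n} y converges unconditionally uniformly in k; (iii) Σ_{n=1}^∞ Sₙ y converges unconditionally; (iv) Tₙ Sₙ y → y. Then (Tₙ) is frequently hypercyclic: there exists x₀ ∈ X such that for every nonempty open U ⊆ Y, the set {n : Tₙ x₀ ∈ U} has positive lower density. -/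
namespace Stmt14Aux

def aIdx (i : ℕ) : ℕ := padicValNat 2 (i+1) + 1

def Lb : ℕ → ℕ
  | 0 => 0
  | i+1 => Lb i + 2 * aIdx i

def cen (i : ℕ) : ℕ := Lb i + aIdx i

lemma aIdx_pos (i : ℕ) : 1 ≤ aIdx i := Nat.le_add_left _ _

lemma Lb_mono : Monotone Lb := by
  apply monotone_nat_of_le_succ
  intro i
  simp [Lb]

lemma cen_sep {i i' : ℕ} (h : i < i') : cen i + aIdx i + aIdx i' ≤ cen i' := by
  have h1 : Lb (i+1) ≤ Lb i' := Lb_mono h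
  have h2 : Lb (i+1) = Lb i + 2 * aIdx i := rfl
  simp only [cen]
  omega

lemma cen_strictMono : StrictMono cen := by
  intro i i' h
  have := cen_sep h
  have := aIdx_pos i
  have := aIdx_pos i'
  omega

lemma le_cen (i : ℕ) : i ≤ cen i := by
  induction i with
  | zero => exact Nat.zero_le _
  | succ n ih =>
    show n + 1 ≤ cen (n+1)
    have := cen_sep (show n < n+1 by omega)
    have := aIdx_pos n
    have := aIdx_pos (n+1)
    omega

lemma aIdx_le_cen (i : ℕ) : aIdx i ≤ cen i := Nat.le_add_left _ _

lemma one_le_cen (i : ℕ) : 1 ≤ cen i := le_trans (aIdx_pos i) (aIdx_le_cen i)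

lemma sumv_eq (M : ℕ) :
    ∑ i ∈ Finset.range M, padicValNat 2 (i+1) = padicValNat 2 (Nat.factorial M) := by
  induction M with
  | zero => simp
  | succ n ih =>
    rw [Finset.sum_range_succ, ih, Nat.factorial_succ, mul_comm,
      padicValNat.mul (Nat.factorial_ne_zero n) (Nat.succ_ne_zero n)]

lemma sumv_le (M : ℕ) : ∑ i ∈ Finset.range M, padicValNat 2 (i+1) ≤ M := by
  rw [sumv_eq]
  haveI : Fact (Nat.Prime 2) := ⟨Nat.prime_two⟩
  have := sub_one_mul_padicValNat_factorial (p := 2) M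
  omega

lemma Lb_eq (M : ℕ) : Lb M = 2 * M + 2 * ∑ i ∈ Finset.range M, padicValNat 2 (i+1) := by
  induction M with
  | zero => simp [Lb]
  | succ n ih =>
    rw [Finset.sum_range_succ]
    show Lb n + 2 * aIdx n = _
    rw [ih, aIdx]
    ring

lemma Lb_le (M : ℕ) : Lb M ≤ 4 * M := by
  have := sumv_le M
  have := Lb_eq M
  omega

lemma cen_lt_of_lt {i M : ℕ} (h : i < M) : cen i < Lb M := by
  have h1 : Lb (i+1) ≤ Lb M := Lb_mono h
  have h2 : Lb (i+1) = Lb i + 2 * aIdx i := rfl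
  have := aIdx_pos i
  simp only [cen]
  omega

lemma padic_of_form (t k : ℕ) : padicValNat 2 (k * 2^(t+1) + 2^t) = t := by
  have h : k * 2^(t+1) + 2^t = 2^t * (2*k+1) := by ring
  rw [h, padicValNat.mul (pow_ne_zero _ two_ne_zero) (by omega),
    padicValNat.prime_pow, padicValNat.eq_zero_of_not_dvd (by omega)]
  omega

lemma count_lb (t M : ℕ) :
    M / 2^(t+1) ≤ ((Finset.range M).filter (fun i => padicValNat 2 (i+1) = t)).card := by
  classical
  set K := M / 2^(t+1) with hK
  have hKM : K * 2^(t+1) ≤ M := Nat.div_mul_le_self M _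
  have : K = (Finset.range K).card := by simp
  rw [this]
  apply Finset.card_le_card_of_injOn (fun k => k * 2^(t+1) + 2^t - 1)
  · intro k hk
    simp only [Finset.mem_coe, Finset.mem_range] at hk
    have h2t : 1 ≤ 2^t := Nat.one_le_two_pow
    have hle : (k+1) * 2^(t+1) ≤ K * 2^(t+1) := Nat.mul_le_mul_right _ (by omega)
    have he1 : (k+1) * 2^(t+1) = k * 2^(t+1) + 2^(t+1) := by ring
    have he2 : 2^(t+1) = 2 * 2^t := by ring
    have hlt : k * 2^(t+1) + 2^t - 1 < M := by omega
    simp only [Finset.mem_coe, Finset.mem_filter, Finset.mem_range]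
    refine ⟨hlt, ?_⟩
    have : k * 2^(t+1) + 2^t - 1 + 1 = k * 2^(t+1) + 2^t := by omega
    rw [this, padic_of_form]
  · intro a _ b _ hab
    have h2t : 1 ≤ 2^t := Nat.one_le_two_pow
    simp only at hab
    have : a * 2^(t+1) = b * 2^(t+1) := by omega
    exact Nat.eq_of_mul_eq_mul_right (by positivity) this

end Stmt14Aux

section InvMetric
variable {G : Type*} [AddCommGroup G] [MetricSpace G]
  (hinv : ∀ a b c : G, dist (a + c) (b + c) = dist a b)

include hinv

lemma inv_dist_sub (a b : G) : dist a b = dist (a - b) 0 := by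
  have := hinv (a - b) 0 b
  simp at this
  exact this

lemma inv_dist_neg (a : G) : dist (-a) 0 = dist a 0 := by
  have h1 : dist (-a) 0 = dist (-a + a) (0 + a) := (hinv _ _ _).symm
  have h2 : dist a 0 = dist 0 a := dist_comm _ _
  simp at h1
  rw [h1, h2]

lemma inv_dist_add_le (a b : G) : dist (a + b) 0 ≤ dist a 0 + dist b 0 := by
  have h1 : dist (a + b) b = dist a 0 := by
    have := hinv a 0 b; simpa using this
  calc dist (a + b) 0 ≤ dist (a + b) b + dist b 0 := dist_triangle _ _ _
    _ = dist a 0 + dist b 0 := by rw [h1]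

lemma inv_dist_add_right (a b : G) : dist (a + b) a = dist b 0 := by
  have := hinv b 0 a
  simp at this
  rw [← this, add_comm]

lemma inv_dist_add_le' (a R c : G) : dist (a + R) c ≤ dist a c + dist R 0 := by
  calc dist (a + R) c ≤ dist (a + R) a + dist a c := dist_triangle _ _ _
    _ = dist R 0 + dist a c := by rw [inv_dist_add_right hinv]
    _ = dist a c + dist R 0 := by ring

lemma inv_dist_sum_le {ι : Type*} (F : Finset ι) (g : ι → G) :
    dist (∑ i ∈ F, g i) 0 ≤ ∑ i ∈ F, dist (g i) 0 := by
  classical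
  induction F using Finset.cons_induction with
  | empty => simp
  | cons i F hi ih =>
    rw [Finset.sum_cons, Finset.sum_cons]
    exact le_trans (inv_dist_add_le hinv _ _) (by gcongr)

lemma inv_uniformAddGroup : IsUniformAddGroup G := by
  constructor
  rw [Metric.uniformContinuous_iff]
  intro ε hε
  refine ⟨ε/2, by positivity, fun {a b} hab => ?_⟩
  obtain ⟨a1, a2⟩ := a
  obtain ⟨b1, b2⟩ := b
  simp only [Prod.dist_eq, max_lt_iff] at hab
  have key : dist (a1 - a2) (b1 - b2) ≤ dist a1 b1 + dist a2 b2 := by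
    have h1 : dist (a1 - a2) (b1 - b2) = dist ((a1 - b1) - (a2 - b2)) 0 := by
      rw [inv_dist_sub hinv]
      congr 1
      abel
    have h2 : dist ((a1-b1) - (a2-b2)) 0 ≤ dist (a1-b1) 0 + dist (a2-b2) 0 := by
      have := inv_dist_add_le hinv (a1-b1) (-(a2-b2))
      rw [inv_dist_neg hinv] at this
      rw [sub_eq_add_neg]
      exact this
    rw [h1]
    refine le_trans h2 ?_
    rw [← inv_dist_sub hinv a1 b1, ← inv_dist_sub hinv a2 b2]
  calc dist (a1 - a2) (b1 - b2) ≤ dist a1 b1 + dist a2 b2 := key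
    _ < ε/2 + ε/2 := add_lt_add hab.1 hab.2
    _ = ε := by ring

omit hinv in
lemma dist_tsum_le {ι : Type*} {f : ι → G} (hf : Summable f) {C : ℝ}
    (h : ∀ F : Finset ι, dist (∑ i ∈ F, f i) 0 ≤ C) :
    dist (∑' i, f i) 0 ≤ C := by
  have h1 : Filter.Tendsto (fun F : Finset ι => ∑ i ∈ F, f i) Filter.atTop
      (nhds (∑' i, f i)) := hf.hasSum
  have h2 : Filter.Tendsto (fun F : Finset ι => dist (∑ i ∈ F, f i) 0) Filter.atTop
      (nhds (dist (∑' i, f i) 0)) := h1.dist tendsto_const_nhds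
  exact le_of_tendsto h2 (Filter.Eventually.of_forall h)

end InvMetric

lemma geom_sum_finset_le (t : Finset ℕ) : ∑ j ∈ t, (1/2 : ℝ)^j ≤ 2 := by
  refine le_trans (Finset.sum_le_sum_of_subset_of_nonneg
    (show t ⊆ Finset.range (t.sup id + 1) from fun j hj =>
      Finset.mem_range.2 (Nat.lt_succ_of_le (Finset.le_sup (f := id) hj)))
    (fun j _ _ => by positivity)) ?_
  exact sum_geometric_two_le _

lemma geom_tail_le (t : Finset ℕ) (J : ℕ) (h : ∀ j ∈ t, J < j) :
    ∑ j ∈ t, (1/2 : ℝ)^j ≤ (1/2)^J := by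
  classical
  have hinj : Set.InjOn (fun j => j - (J+1)) t := by
    intro a ha b hb hab
    have := h a ha; have := h b hb
    simp only at hab
    omega
  have h1 : ∑ j ∈ t, (1/2 : ℝ)^j
      = ∑ k ∈ t.image (fun j => j - (J+1)), (1/2 : ℝ)^(k + (J+1)) := by
    rw [Finset.sum_image (fun a ha b hb hab => hinj ha hb hab)]
    refine Finset.sum_congr rfl (fun j hj => ?_)
    have := h j hj
    congr 1
    omega
  rw [h1]
  have h2 : ∀ k : ℕ, (1/2 : ℝ)^(k + (J+1)) = (1/2)^(J+1) * (1/2)^k := by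
    intro k; rw [pow_add]; ring
  rw [Finset.sum_congr rfl (fun k _ => h2 k), ← Finset.mul_sum]
  have h3 := geom_sum_finset_le (t.image (fun j => j - (J+1)))
  have h4 : (0:ℝ) < (1/2:ℝ)^(J+1) := by positivity
  calc (1/2 : ℝ)^(J+1) * ∑ k ∈ t.image (fun j => j - (J+1)), (1/2:ℝ)^k
      ≤ (1/2)^(J+1) * 2 := by nlinarith
    _ = (1/2)^J := by rw [pow_succ]; ring

open Stmt14Aux in
/-- Bonilla–Grosse-Erdmann criterion for frequent hypercyclicity of a
sequence of operators between F-spaces. Unconditional convergence (uniformly in k) is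
expressed through the finite-subset Cauchy condition, which in a complete space is
equivalent to unconditional convergence. -/
theorem stmt14 {X Y : Type*}
    [AddCommGroup X] [Module ℂ X] [MetricSpace X] [IsTopologicalAddGroup X]
    [ContinuousSMul ℂ X] [CompleteSpace X]
    [AddCommGroup Y] [Module ℂ Y] [MetricSpace Y] [IsTopologicalAddGroup Y]
    [ContinuousSMul ℂ Y] [CompleteSpace Y] [TopologicalSpace.SeparableSpace Y]
    (hinvX : ∀ a b c : X, dist (a + c) (b + c) = dist a b)
    (hinvY : ∀ a b c : Y, dist (a + c) (b + c) = dist a b)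
    (T : ℕ → X →L[ℂ] Y) (Y₀ : Set Y) (hY₀ : Dense Y₀) (S : ℕ → Y → X)
    (hi : ∀ y ∈ Y₀, ∀ ε : ℝ, 0 < ε → ∃ N : ℕ, ∀ k : ℕ, ∀ F : Finset ℕ,
      (∀ n ∈ F, N < n ∧ 1 ≤ n ∧ n ≤ k) →
        dist (∑ n ∈ F, T k (S (k - n) y)) 0 < ε)
    (hii : ∀ y ∈ Y₀, ∀ ε : ℝ, 0 < ε → ∃ N : ℕ, ∀ k : ℕ, ∀ F : Finset ℕ,
      (∀ n ∈ F, N < n) → dist (∑ n ∈ F, T k (S (k + n) y)) 0 < ε)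
    (hiii : ∀ y ∈ Y₀, ∀ ε : ℝ, 0 < ε → ∃ N : ℕ, ∀ F : Finset ℕ,
      (∀ n ∈ F, N < n) → dist (∑ n ∈ F, S n y) 0 < ε)
    (hiv : ∀ y ∈ Y₀, Filter.Tendsto (fun n => T n (S n y)) Filter.atTop (nhds y)) :
    ∃ x₀ : X, ∀ U : Set Y, IsOpen U → U.Nonempty →
      0 < Filter.liminf (fun N : ℕ =>
        ((Set.ncard {n : ℕ | n < N ∧ T (n + 1) x₀ ∈ U}) : ℝ) / N) Filter.atTop := by
  classical
  haveI hUX : IsUniformAddGroup X := inv_uniformAddGroup hinvX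
  haveI hUY : IsUniformAddGroup Y := inv_uniformAddGroup hinvY
  haveI : Nonempty Y := ⟨0⟩
  -- a dense sequence with values in Y₀
  obtain ⟨e, he₀, heD⟩ : ∃ e : ℕ → Y, (∀ p, e p ∈ Y₀) ∧ DenseRange e := by
    haveI : SecondCountableTopology Y := UniformSpace.secondCountable_of_separable Y
    haveI : Nonempty ↥Y₀ := hY₀.nonempty.to_subtype
    refine ⟨fun p => (TopologicalSpace.denseSeq ↥Y₀ p : Y),
      fun p => (TopologicalSpace.denseSeq ↥Y₀ p).2, ?_⟩
    have h1 : DenseRange (TopologicalSpace.denseSeq ↥Y₀) :=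
      TopologicalSpace.denseRange_denseSeq _
    have h2 : DenseRange ((↑) : ↥Y₀ → Y) := hY₀.denseRange_val
    exact h2.comp h1 continuous_subtype_val
  set y : ℕ → Y := fun j => e (Nat.unpair j).1 with hy_def
  have hyY₀ : ∀ j, y j ∈ Y₀ := fun j => he₀ _
  have hyrec : ∀ p J : ℕ, ∃ j, J ≤ j ∧ y j = e p := by
    intro p J
    refine ⟨Nat.pair p J, Nat.right_le_pair p J, ?_⟩
    simp [hy_def, Nat.unpair_pair]
  set ee : ℕ → ℝ := fun s => (1/2 : ℝ)^s with hee_def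
  have heps : ∀ s, 0 < ee s := fun s => by positivity
  have hemono : ∀ s t : ℕ, s ≤ t → ee t ≤ ee s := fun s t h =>
    pow_le_pow_of_le_one (by norm_num) (by norm_num) h
  -- choose the thresholds
  have H1 : ∀ j s : ℕ, ∃ N, ∀ k : ℕ, ∀ F : Finset ℕ,
      (∀ n ∈ F, N < n ∧ 1 ≤ n ∧ n ≤ k) →
        dist (∑ n ∈ F, T k (S (k - n) (y j))) 0 < ee s :=
    fun j s => hi (y j) (hyY₀ j) _ (heps s)
  choose N1 hN1 using H1
  have H2 : ∀ j s : ℕ, ∃ N, ∀ k : ℕ, ∀ F : Finset ℕ,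
      (∀ n ∈ F, N < n) → dist (∑ n ∈ F, T k (S (k + n) (y j))) 0 < ee s :=
    fun j s => hii (y j) (hyY₀ j) _ (heps s)
  choose N2 hN2 using H2
  have H3 : ∀ j s : ℕ, ∃ N, ∀ F : Finset ℕ,
      (∀ n ∈ F, N < n) → dist (∑ n ∈ F, S n (y j)) 0 < ee s :=
    fun j s => hiii (y j) (hyY₀ j) _ (heps s)
  choose N3 hN3 using H3
  have H4 : ∀ j s : ℕ, ∃ N, ∀ n, n ≥ N → dist (T n (S n (y j))) (y j) < ee s :=
    fun j s => Metric.tendsto_atTop.1 (hiv (y j) (hyY₀ j)) _ (heps s)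
  choose N4 hN4 using H4
    -- the rapidly growing sequence m
  set B : ℕ → ℕ := fun j => N3 j j + N4 j j +
    (Finset.range (j+1)).sup (fun l => N1 l (2*j) + N2 l (2*j)) + j with hB_def
  set m : ℕ → ℕ := fun j => Nat.rec (B 0 + 1) (fun p prev => prev + B (p+1) + 1) j
    with hm_def
  have hm_succ : ∀ j, m (j+1) = m j + B (j+1) + 1 := fun j => rfl
  have hmB : ∀ j, B j < m j := by
    intro j
    cases j with
    | zero => show B 0 < B 0 + 1; omega
    | succ p =>
      rw [hm_succ]
      omega
  have hm_mono : StrictMono m :=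
    strictMono_nat_of_lt_succ (fun j => by rw [hm_succ]; omega)
  have hBj : ∀ j, j ≤ B j := fun j => by simp [hB_def]
  have hm_pos : ∀ j, j < m j := fun j => lt_of_le_of_lt (hBj j) (hmB j)
  have hmN3 : ∀ j, N3 j j < m j := fun j =>
    lt_of_le_of_lt (by simp [hB_def]; omega) (hmB j)
  have hmN4 : ∀ j, N4 j j < m j := fun j =>
    lt_of_le_of_lt (by simp [hB_def]; omega) (hmB j)
  have hmN12 : ∀ l j : ℕ, l ≤ j → N1 l (2*j) < m j ∧ N2 l (2*j) < m j := by
    intro l j hlj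
    have hsup : N1 l (2*j) + N2 l (2*j)
        ≤ (Finset.range (j+1)).sup (fun l => N1 l (2*j) + N2 l (2*j)) :=
      Finset.le_sup (f := fun l => N1 l (2*j) + N2 l (2*j))
        (show l ∈ Finset.range (j+1) from Finset.mem_range.2 (by omega))
    have h1 : B j = N3 j j + N4 j j +
        (Finset.range (j+1)).sup (fun l => N1 l (2*j) + N2 l (2*j)) + j := by
      simp only [hB_def]
    have := hmB j
    omega
  -- the building blocks of the series
  set v : ℕ → ℕ → X := fun j i => if aIdx i = m j then S (cen i) (y j) else 0 with hv_def
  have hsum_v : ∀ (j : ℕ) (F : Finset ℕ),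
      ∑ i ∈ F, v j i = ∑ i ∈ F.filter (fun i => aIdx i = m j), S (cen i) (y j) := by
    intro j F
    rw [Finset.sum_filter]
  have himg : ∀ (j : ℕ) (F : Finset ℕ),
      ∑ i ∈ F.filter (fun i => aIdx i = m j), S (cen i) (y j)
      = ∑ n ∈ (F.filter (fun i => aIdx i = m j)).image cen, S n (y j) := by
    intro j F
    rw [Finset.sum_image (fun a _ b _ h => cen_strictMono.injective h)]
  have hv_sum : ∀ j, Summable (v j) := by
    intro j
    rw [summable_iff_vanishing]
    intro eset heset
    obtain ⟨δ, hδ, hball⟩ := Metric.mem_nhds_iff.1 heset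
    obtain ⟨N, hN⟩ := hiii (y j) (hyY₀ j) δ hδ
    refine ⟨Finset.range (N+1), fun t ht => ?_⟩
    apply hball
    rw [Metric.mem_ball, hsum_v, himg]
    apply hN
    intro n hn
    simp only [Finset.mem_image, Finset.mem_filter] at hn
    obtain ⟨i, ⟨hiF, _⟩, rfl⟩ := hn
    have hi : N + 1 ≤ i := by
      by_contra h
      exact (Finset.disjoint_left.1 ht hiF) (Finset.mem_range.2 (by omega))
    have := le_cen i
    omega
  have hv_bound : ∀ (j : ℕ) (F : Finset ℕ), dist (∑ i ∈ F, v j i) 0 ≤ ee j := by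
    intro j F
    rw [hsum_v, himg]
    apply le_of_lt
    apply hN3 j j
    intro n hn
    simp only [Finset.mem_image, Finset.mem_filter] at hn
    obtain ⟨i, ⟨_, hai⟩, rfl⟩ := hn
    have h1 := aIdx_le_cen i
    have h2 := hmN3 j
    omega
  set u : ℕ → X := fun j => ∑' i, v j i with hu_def
  have hu_bound : ∀ j, dist (u j) 0 ≤ ee j := fun j =>
    dist_tsum_le (hv_sum j) (hv_bound j)
  have hu_sum : Summable u := by
    rw [summable_iff_vanishing]
    intro eset heset
    obtain ⟨δ, hδ, hball⟩ := Metric.mem_nhds_iff.1 heset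
    obtain ⟨J, hJ⟩ : ∃ J : ℕ, (1/2:ℝ)^J < δ :=
      exists_pow_lt_of_lt_one hδ (by norm_num)
    refine ⟨Finset.range (J+1), fun t ht => hball ?_⟩
    rw [Metric.mem_ball]
    calc dist (∑ j ∈ t, u j) 0 ≤ ∑ j ∈ t, dist (u j) 0 := inv_dist_sum_le hinvX t u
      _ ≤ ∑ j ∈ t, ee j := Finset.sum_le_sum (fun j _ => hu_bound j)
      _ ≤ (1/2)^J := geom_tail_le t J (fun j hj => by
            by_contra h
            exact (Finset.disjoint_left.1 ht hj) (Finset.mem_range.2 (by omega)))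
      _ < δ := hJ
  have hmmax : ∀ a b : ℕ, m (max a b) ≤ m a + m b := by
    intro a b
    rcases le_total a b with h | h
    · rw [max_eq_right h]; exact Nat.le_add_left _ _
    · rw [max_eq_left h]; exact Nat.le_add_right _ _
  -- the key estimate
  have key : ∀ j i : ℕ, aIdx i = m j →
      dist (T (cen i) (∑' j', u j')) (y j) ≤ 7 * ee j := by
    intro j i hai
    set n := cen i with hn_def
    have hsum_Tv : ∀ l, Summable (fun i' => T n (v l i')) := fun l =>
      (hv_sum l).map (T n) (T n).continuous
    -- deleted finite sums are small
    have sub : ∀ (l : ℕ) (F : Finset ℕ), i ∉ F →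
        dist (∑ i' ∈ F, T n (v l i')) 0 ≤ 2 * ee (j + l) := by
      intro l F hiF
      have hjl : j + l ≤ 2 * max j l := by
        rcases le_total j l with h | h
        · rw [max_eq_right h]; omega
        · rw [max_eq_left h]; omega
      have h0 : ∑ i' ∈ F, T n (v l i')
          = ∑ i' ∈ F.filter (fun i' => aIdx i' = m l), T n (S (cen i') (y l)) := by
        rw [Finset.sum_filter]
        refine Finset.sum_congr rfl (fun i' _ => ?_)
        simp only [hv_def]
        split <;> simp
      rw [h0]
      set F' := F.filter (fun i' => aIdx i' = m l) with hF'
      have hmemF' : ∀ i' ∈ F', aIdx i' = m l ∧ i' ≠ i := by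
        intro i' hi'
        obtain ⟨h1, h2⟩ := Finset.mem_filter.1 hi'
        exact ⟨h2, fun h => hiF (h ▸ h1)⟩
      rw [← Finset.sum_filter_add_sum_filter_not F' (fun i' => cen i' < n)]
      refine le_trans (inv_dist_add_le hinvY _ _) ?_
      have hN1m := (hmN12 l (max j l) (le_max_right j l)).1
      have hN2m := (hmN12 l (max j l) (le_max_right j l)).2
      have hmmx := hmmax j l
      -- part 1 : cen i' < n
      have hsep_lt : ∀ i' ∈ F'.filter (fun i' => cen i' < n),
          N1 l (2 * max j l) < n - cen i' ∧ 1 ≤ n - cen i' ∧ n - cen i' ≤ n := by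
        intro i' hi'
        obtain ⟨hi'F, hlt⟩ := Finset.mem_filter.1 hi'
        obtain ⟨ha', _⟩ := hmemF' i' hi'F
        have hii' : i' < i := cen_strictMono.lt_iff_lt.1 (by omega)
        have hsep := cen_sep hii'
        omega
      have hb1 : dist (∑ i' ∈ F'.filter (fun i' => cen i' < n),
          T n (S (cen i') (y l))) 0 ≤ ee (j + l) := by
        have himg1 : ∑ i' ∈ F'.filter (fun i' => cen i' < n), T n (S (cen i') (y l))
            = ∑ ν ∈ (F'.filter (fun i' => cen i' < n)).image (fun i' => n - cen i'),
                T n (S (n - ν) (y l)) := by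
          rw [Finset.sum_image]
          · refine Finset.sum_congr rfl (fun i' hi' => ?_)
            obtain ⟨_, hlt⟩ := Finset.mem_filter.1 hi'
            congr 2
            omega
          · intro a ha b hb hab
            obtain ⟨_, hlta⟩ := Finset.mem_filter.1 ha
            obtain ⟨_, hltb⟩ := Finset.mem_filter.1 hb
            simp only at hab
            have : cen a = cen b := by omega
            exact cen_strictMono.injective this
        rw [himg1]
        refine le_trans (le_of_lt (hN1 l (2 * max j l) n _ ?_)) (hemono _ _ hjl)
        intro ν hν
        simp only [Finset.mem_image] at hν
        obtain ⟨i', hi', rfl⟩ := hν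
        exact ⟨(hsep_lt i' hi').1, (hsep_lt i' hi').2.1, (hsep_lt i' hi').2.2⟩
      -- part 2 : n < cen i'
      have hsep_gt : ∀ i' ∈ F'.filter (fun i' => ¬ cen i' < n),
          N2 l (2 * max j l) < cen i' - n := by
        intro i' hi'
        obtain ⟨hi'F, hge⟩ := Finset.mem_filter.1 hi'
        obtain ⟨ha', hne⟩ := hmemF' i' hi'F
        have hcne : cen i' ≠ n := fun h => hne (cen_strictMono.injective (by omega))
        have hii' : i < i' := cen_strictMono.lt_iff_lt.1 (by omega)
        have hsep := cen_sep hii'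
        omega
      have hb2 : dist (∑ i' ∈ F'.filter (fun i' => ¬ cen i' < n),
          T n (S (cen i') (y l))) 0 ≤ ee (j + l) := by
        have himg2 : ∑ i' ∈ F'.filter (fun i' => ¬ cen i' < n), T n (S (cen i') (y l))
            = ∑ ν ∈ (F'.filter (fun i' => ¬ cen i' < n)).image (fun i' => cen i' - n),
                T n (S (n + ν) (y l)) := by
          rw [Finset.sum_image]
          · refine Finset.sum_congr rfl (fun i' hi' => ?_)
            obtain ⟨_, hge⟩ := Finset.mem_filter.1 hi'
            congr 2
            omega
          · intro a ha b hb hab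
            obtain ⟨_, hgea⟩ := Finset.mem_filter.1 ha
            obtain ⟨_, hgeb⟩ := Finset.mem_filter.1 hb
            simp only at hab
            have : cen a = cen b := by omega
            exact cen_strictMono.injective this
        rw [himg2]
        refine le_trans (le_of_lt (hN2 l (2 * max j l) n _ ?_)) (hemono _ _ hjl)
        intro ν hν
        simp only [Finset.mem_image] at hν
        obtain ⟨i', hi', rfl⟩ := hν
        exact hsep_gt i' hi'
      have h2e : ee (j+l) + ee (j+l) = 2 * ee (j+l) := by ring
      linarith [add_le_add hb1 hb2]
    -- pass to infinite sums
    have hdel_sum : ∀ l, Summable (fun i' => if i' = i then 0 else T n (v l i')) := by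
      intro l
      have hsingle : Summable (fun i' => if i' = i then T n (v l i) else 0) :=
        (hasSum_ite_eq i (T n (v l i))).summable
      refine ((hsum_Tv l).sub hsingle).congr (fun i' => ?_)
      by_cases h : i' = i <;> simp [h]
    have hdel_bound : ∀ l,
        dist (∑' i', if i' = i then 0 else T n (v l i')) 0 ≤ 2 * ee (j + l) := by
      intro l
      apply dist_tsum_le (hdel_sum l)
      intro F
      have hF : ∑ i' ∈ F, (if i' = i then 0 else T n (v l i'))
          = ∑ i' ∈ F.erase i, T n (v l i') := by
        rw [← Finset.sum_erase F (by simp : (if i = i then (0:Y) else T n (v l i)) = 0)]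
        exact Finset.sum_congr rfl (fun i' hi' => if_neg (Finset.ne_of_mem_erase hi'))
      rw [hF]
      exact sub l (F.erase i) (Finset.notMem_erase i F)
    have hTn_u : ∀ l, T n (u l) = ∑' i', T n (v l i') := fun l =>
      ContinuousLinearMap.map_tsum (T n) (hv_sum l)
    have hw_split : ∀ l, T n (u l)
        = T n (v l i) + ∑' i', if i' = i then 0 else T n (v l i') := by
      intro l
      rw [hTn_u l, Summable.tsum_eq_add_tsum_ite (hsum_Tv l) i]
    have hvji : v j i = S n (y j) := by
      have h1 : v j i = S (cen i) (y j) := by simp [hv_def, hai]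
      rw [h1, ← hn_def]
    have hnm : n ≥ N4 j j := by
      have h1 := aIdx_le_cen i
      have h2 := hmN4 j
      omega
    have hwj : dist (T n (u j)) (y j) ≤ ee j + 2 * ee (j + j) := by
      rw [hw_split j, hvji]
      refine le_trans (inv_dist_add_le' hinvY _ _ _) (add_le_add ?_ (hdel_bound j))
      exact le_of_lt (hN4 j j n hnm)
    have hwl : ∀ l, l ≠ j → dist (T n (u l)) 0 ≤ 2 * ee (j + l) := by
      intro l hlj
      have hne : ¬ (aIdx i = m l) := by
        rw [hai]
        intro h
        exact hlj (hm_mono.injective h).symm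
      have hv0 : v l i = 0 := by simp [hv_def, hne]
      rw [hw_split l, hv0, map_zero, zero_add]
      exact hdel_bound l
    have hTu_sum : Summable (fun l => T n (u l)) := hu_sum.map (T n) (T n).continuous
    have hRtop_sum : Summable (fun l => if l = j then 0 else T n (u l)) := by
      have hsingle : Summable (fun l => if l = j then T n (u j) else 0) :=
        (hasSum_ite_eq j (T n (u j))).summable
      refine (hTu_sum.sub hsingle).congr (fun l => ?_)
      by_cases h : l = j <;> simp [h]
    have hRtop : dist (∑' l, if l = j then 0 else T n (u l)) 0 ≤ 4 * ee j := by
      apply dist_tsum_le hRtop_sum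
      intro F
      have hF : ∑ l ∈ F, (if l = j then 0 else T n (u l))
          = ∑ l ∈ F.erase j, T n (u l) := by
        rw [← Finset.sum_erase F (by simp : (if j = j then (0:Y) else T n (u j)) = 0)]
        exact Finset.sum_congr rfl (fun l hl => if_neg (Finset.ne_of_mem_erase hl))
      rw [hF]
      calc dist (∑ l ∈ F.erase j, T n (u l)) 0
          ≤ ∑ l ∈ F.erase j, dist (T n (u l)) 0 := inv_dist_sum_le hinvY _ _
        _ ≤ ∑ l ∈ F.erase j, 2 * ee (j + l) :=
            Finset.sum_le_sum (fun l hl => hwl l (Finset.ne_of_mem_erase hl))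
        _ = 2 * ee j * ∑ l ∈ F.erase j, ee l := by
            rw [Finset.mul_sum]
            refine Finset.sum_congr rfl (fun l _ => ?_)
            simp only [hee_def]
            rw [pow_add]
            ring
        _ ≤ 2 * ee j * 2 := by
            have h1 : ∑ l ∈ F.erase j, ee l ≤ 2 := by
              simp only [hee_def]
              exact geom_sum_finset_le _
            have h2 : (0:ℝ) ≤ 2 * ee j := by positivity
            nlinarith
        _ = 4 * ee j := by ring
    have hTx : T n (∑' j', u j') = ∑' l, T n (u l) :=
      ContinuousLinearMap.map_tsum (T n) hu_sum
    rw [hTx, Summable.tsum_eq_add_tsum_ite hTu_sum j]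
    refine le_trans (inv_dist_add_le' hinvY _ _ _) ?_
    have h2j : ee (j + j) ≤ ee j := hemono _ _ (by omega)
    linarith
  -- conclusion
  refine ⟨∑' j', u j', ?_⟩
  intro U hU hUne
  obtain ⟨zz, hzz, hzU⟩ : ∃ zz ∈ Set.range e, zz ∈ U := by
    obtain ⟨x, hx1, hx2⟩ := heD.inter_open_nonempty U hU hUne
    exact ⟨x, hx2, hx1⟩
  obtain ⟨p, rfl⟩ := hzz
  obtain ⟨r, hr, hball⟩ := Metric.isOpen_iff.1 hU (e p) hzU
  obtain ⟨J0, hJ0⟩ : ∃ J0 : ℕ, (1/2:ℝ)^J0 < r / 7 :=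
    exists_pow_lt_of_lt_one (by positivity) (by norm_num)
  obtain ⟨j, hjJ, hyj⟩ := hyrec p J0
  have hjr : 7 * ee j < r := by
    have h1 : ee j ≤ ee J0 := hemono _ _ hjJ
    have h2 : ee J0 < r / 7 := hJ0
    linarith
  have hmem : ∀ i : ℕ, aIdx i = m j → T (cen i) (∑' j', u j') ∈ U := by
    intro i hai
    apply hball
    rw [Metric.mem_ball, ← hyj]
    exact lt_of_le_of_lt (key j i hai) hjr
  have hs1 : 1 ≤ m j := by have := hm_pos j; omega
  have hcount : ∀ N : ℕ, N / (4 * 2^(m j)) ≤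
      {n : ℕ | n < N ∧ T (n + 1) (∑' j', u j') ∈ U}.ncard := by
    intro N
    set M := N / 4 with hM
    set F₀ := ((Finset.range M).filter (fun i => padicValNat 2 (i+1) = m j - 1)).image
      (fun i => cen i - 1) with hF₀
    have hcard : M / 2^(m j) ≤ F₀.card := by
      rw [hF₀, Finset.card_image_of_injOn]
      · have h := count_lb (m j - 1) M
        have he : m j - 1 + 1 = m j := by omega
        rwa [he] at h
      · intro a ha b hb hab
        have h1 := one_le_cen a
        have h2 := one_le_cen b
        simp only at hab
        have : cen a = cen b := by omega
        exact cen_strictMono.injective this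
    have hsub : (F₀ : Set ℕ) ⊆ {n : ℕ | n < N ∧ T (n + 1) (∑' j', u j') ∈ U} := by
      intro nn hnn
      simp only [hF₀, Finset.coe_image, Set.mem_image, Finset.mem_coe,
        Finset.mem_filter, Finset.mem_range] at hnn
      obtain ⟨i, ⟨hiM, hpad⟩, rfl⟩ := hnn
      have hai : aIdx i = m j := by
        simp only [aIdx]
        omega
      have h1 : cen i < Lb M := cen_lt_of_lt hiM
      have h2 : Lb M ≤ 4 * M := Lb_le M
      have h3 : N / 4 * 4 ≤ N := Nat.div_mul_le_self N 4
      have hc1 := one_le_cen i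
      constructor
      · show cen i - 1 < N
        omega
      · show T (cen i - 1 + 1) (∑' j', u j') ∈ U
        have he : cen i - 1 + 1 = cen i := by omega
        rw [he]
        exact hmem i hai
    have hfin : {n : ℕ | n < N ∧ T (n + 1) (∑' j', u j') ∈ U}.Finite :=
      Set.Finite.subset (Set.finite_Iio N) (fun nn h => h.1)
    calc N / (4 * 2^(m j)) = M / 2^(m j) := by rw [hM, Nat.div_div_eq_div_mul]
      _ ≤ F₀.card := hcard
      _ = (F₀ : Set ℕ).ncard := (Set.ncard_coe_finset F₀).symm
      _ ≤ _ := Set.ncard_le_ncard hsub hfin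
  set D : ℕ := 4 * 2^(m j) with hD
  have hDpos : 0 < D := by rw [hD]; positivity
  have hncard_le : ∀ N : ℕ, {n : ℕ | n < N ∧ T (n + 1) (∑' j', u j') ∈ U}.ncard ≤ N := by
    intro N
    have hsub2 : {n : ℕ | n < N ∧ T (n + 1) (∑' j', u j') ∈ U} ⊆ Set.Iio N :=
      fun nn hnn => hnn.1
    have h1 := Set.ncard_le_ncard hsub2 (Set.finite_Iio N)
    have h2 : (Set.Iio N).ncard = N := by
      rw [← Finset.coe_range, Set.ncard_coe_finset, Finset.card_range]
    omega
  have hf_le_one : ∀ N : ℕ,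
      ((Set.ncard {n : ℕ | n < N ∧ T (n + 1) (∑' j', u j') ∈ U}) : ℝ) / N ≤ 1 := by
    intro N
    rcases Nat.eq_zero_or_pos N with h | h
    · subst h; simp
    · rw [div_le_one (by exact_mod_cast h)]
      exact_mod_cast hncard_le N
  have hev : ∀ᶠ N : ℕ in Filter.atTop, (1:ℝ)/(2*(D:ℝ)) ≤
      ((Set.ncard {n : ℕ | n < N ∧ T (n + 1) (∑' j', u j') ∈ U}) : ℝ) / N := by
    filter_upwards [Filter.eventually_ge_atTop (2*D)] with N hN
    have hq := hcount N
    set q := N / D with hq_def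
    have hq1 : 1 ≤ q := by
      rw [hq_def]
      rw [Nat.one_le_div_iff hDpos]
      omega
    have hmod := Nat.div_add_mod N D
    have hmodlt : N % D < D := Nat.mod_lt N hDpos
    have hNpos : 0 < N := by omega
    have hcast : (D:ℝ) * (q:ℝ) + ((N % D : ℕ):ℝ) = (N:ℝ) := by exact_mod_cast hmod
    have h_ncard : (q:ℝ) ≤
        ((Set.ncard {n : ℕ | n < N ∧ T (n + 1) (∑' j', u j') ∈ U}) : ℝ) := by
      exact_mod_cast hq
    have hDr : (0:ℝ) < D := by exact_mod_cast hDpos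
    have hq1r : (1:ℝ) ≤ q := by exact_mod_cast hq1
    have hmodr : ((N % D : ℕ):ℝ) < D := by exact_mod_cast hmodlt
    rw [div_le_div_iff₀ (by positivity) (by exact_mod_cast hNpos)]
    nlinarith
  have hbdd : Filter.IsBoundedUnder (· ≤ ·) Filter.atTop
      (fun N : ℕ => ((Set.ncard {n : ℕ | n < N ∧ T (n + 1) (∑' j', u j') ∈ U}) : ℝ) / N) :=
    Filter.isBoundedUnder_of ⟨1, fun N => hf_le_one N⟩
  have hlim := Filter.le_liminf_of_le hbdd.isCoboundedUnder_ge hev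
  calc (0:ℝ) < 1/(2*(D:ℝ)) := by positivity
    _ ≤ _ := hlim
end
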